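/- As p → 1⁺, the constant K_p = Γ(1/2)Γ(c_p)/(Γ(a_p+3/2)Γ(b_p+3/2)) satisfies K_p = (p-1)·(1+o(1)), where a_p, b_p, c_p are the hypergeometric parameters a_p = (3-p+√(4+12(p-1)-3(p-1)²))/(4(p-1)), b_p = (3-p-√(4+12(p-1)-3(p-1)²))/(4(p-1)), c_p = p/(p-1). -/

import Mathlib

open Real Filter

noncomputable def ap (p : ℝ) : ℝ :=
  (3 - p + Real.sqrt (4 + 12 * (p - 1) - 3 * (p - 1) ^ 2)) / (4 * (p - 1))

noncomputable def bp (p : ℝ) : ℝ :=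
  (3 - p - Real.sqrt (4 + 12 * (p - 1) - 3 * (p - 1) ^ 2)) / (4 * (p - 1))

noncomputable def cp (p : ℝ) : ℝ := p / (p - 1)

/-- The constant `K_p = Γ(1/2)Γ(c_p)/(Γ(a_p+3/2)Γ(b_p+3/2))`. -/
noncomputable def Kp (p : ℝ) : ℝ :=
  Real.Gamma (1 / 2) * Real.Gamma (cp p) /
    (Real.Gamma (ap p + 3 / 2) * Real.Gamma (bp p + 3 / 2))

/- ### Auxiliary definitions -/

noncomputable def Xf (p : ℝ) : ℝ := ap p + 1 / 2
noncomputable def Sf (p : ℝ) : ℝ := bp p + 1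
noncomputable def Cf (p : ℝ) : ℝ := Real.Gamma (1 / 2) / Real.Gamma (Sf p + 1 / 2)
noncomputable def Df (p : ℝ) : ℝ := Real.exp (Sf p * Real.log (Xf p)) / (Xf p * (p - 1))
noncomputable def Gf (p : ℝ) : ℝ :=
  Real.Gamma (Xf p + Sf p) / (Real.Gamma (Xf p) * Real.exp (Sf p * Real.log (Xf p)))
noncomputable def lof (p : ℝ) : ℝ :=
  Real.exp ((1 - Sf p) * Real.log (Xf p / (Xf p + Sf p)))

/- ### Wendel's inequalities -/

lemma wendel1 {x s : ℝ} (hx : 0 < x) (hs0 : 0 ≤ s) (hs1 : s ≤ 1) :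
    Real.Gamma (x + s) ≤ Real.Gamma x * x ^ s := by
  have hx1 : (0:ℝ) < x + 1 := by linarith
  have h := convexOn_log_Gamma.2 (Set.mem_Ioi.2 hx) (Set.mem_Ioi.2 hx1)
    (by linarith : (0:ℝ) ≤ 1 - s) hs0 (by ring)
  simp only [smul_eq_mul, Function.comp] at h
  have hc : (1 - s) * x + s * (x + 1) = x + s := by ring
  rw [hc, Real.Gamma_add_one hx.ne',
    Real.log_mul hx.ne' (Real.Gamma_pos_of_pos hx).ne'] at h
  have hxs : 0 < Real.Gamma (x + s) := Real.Gamma_pos_of_pos (by linarith)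
  calc Real.Gamma (x + s) = Real.exp (Real.log (Real.Gamma (x + s))) :=
        (Real.exp_log hxs).symm
    _ ≤ Real.exp (Real.log (Real.Gamma x) + s * Real.log x) :=
        Real.exp_le_exp.2 (by nlinarith [h])
    _ = Real.Gamma x * x ^ s := by
        rw [Real.exp_add, Real.exp_log (Real.Gamma_pos_of_pos hx),
          Real.rpow_def_of_pos hx, mul_comm (Real.log x) s]

lemma wendel2 {x s : ℝ} (hx : 0 < x) (hs0 : 0 ≤ s) (hs1 : s ≤ 1) :
    Real.Gamma x * x ≤ Real.Gamma (x + s) * (x + s) ^ (1 - s) := by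
  have hxs : (0:ℝ) < x + s := by linarith
  have hxs1 : (0:ℝ) < x + s + 1 := by linarith
  have h := convexOn_log_Gamma.2 (Set.mem_Ioi.2 hxs) (Set.mem_Ioi.2 hxs1)
    hs0 (by linarith : (0:ℝ) ≤ 1 - s) (by ring)
  simp only [smul_eq_mul, Function.comp] at h
  have hc : s * (x + s) + (1 - s) * (x + s + 1) = x + 1 := by ring
  rw [hc, Real.Gamma_add_one hx.ne', Real.Gamma_add_one hxs.ne',
    Real.log_mul hx.ne' (Real.Gamma_pos_of_pos hx).ne',
    Real.log_mul hxs.ne' (Real.Gamma_pos_of_pos hxs).ne'] at h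
  calc Real.Gamma x * x
      = Real.exp (Real.log (Real.Gamma x) + Real.log x) := by
        rw [Real.exp_add, Real.exp_log (Real.Gamma_pos_of_pos hx), Real.exp_log hx]
    _ ≤ Real.exp (Real.log (Real.Gamma (x + s)) + (1 - s) * Real.log (x + s)) :=
        Real.exp_le_exp.2 (by nlinarith [h])
    _ = Real.Gamma (x + s) * (x + s) ^ (1 - s) := by
        rw [Real.exp_add, Real.exp_log (Real.Gamma_pos_of_pos hxs),
          Real.rpow_def_of_pos hxs, mul_comm (Real.log (x + s)) (1 - s)]

/- ### Pointwise facts for `p ∈ (1, 2)` -/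

lemma sqrt_bounds {p : ℝ} (hp1 : 1 < p) (hp2 : p < 2) :
    2 + 3 * (p - 1) - 3 * (p - 1) ^ 2 < Real.sqrt (4 + 12 * (p - 1) - 3 * (p - 1) ^ 2) ∧
    Real.sqrt (4 + 12 * (p - 1) - 3 * (p - 1) ^ 2) < 2 + 3 * (p - 1) := by
  set e := p - 1 with he
  have he0 : 0 < e := by simp [he]; linarith
  have he1 : e < 1 := by simp [he]; linarith
  constructor
  · rw [Real.lt_sqrt (by nlinarith)]
    nlinarith [mul_pos (pow_pos he0 3) (by linarith : (0:ℝ) < 2 - e)]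
  · rw [Real.sqrt_lt' (by linarith)]
    nlinarith

lemma X_eq {p : ℝ} (hp1 : 1 < p) :
    (p - 1) * Xf p = (2 + (p - 1) + Real.sqrt (4 + 12 * (p - 1) - 3 * (p - 1) ^ 2)) / 4 := by
  have h : p - 1 ≠ 0 := by linarith
  unfold Xf ap
  field_simp
  ring

lemma X_bounds {p : ℝ} (hp1 : 1 < p) (hp2 : p < 2) :
    1 < (p - 1) * Xf p ∧ (p - 1) * Xf p < 1 + (p - 1) := by
  obtain ⟨h1, h2⟩ := sqrt_bounds hp1 hp2
  rw [X_eq hp1]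
  constructor <;> nlinarith

lemma X_gt_one {p : ℝ} (hp1 : 1 < p) (hp2 : p < 2) : 1 < Xf p := by
  obtain ⟨h1, _⟩ := X_bounds hp1 hp2
  nlinarith [h1]

lemma X_le {p : ℝ} (hp1 : 1 < p) (hp2 : p < 2) : Xf p ≤ p / (p - 1) := by
  obtain ⟨_, h2⟩ := X_bounds hp1 hp2
  rw [le_div_iff₀ (by linarith : (0:ℝ) < p - 1)]
  nlinarith

lemma S_eq {p : ℝ} (hp1 : 1 < p) :
    Sf p = (2 + 3 * (p - 1) - Real.sqrt (4 + 12 * (p - 1) - 3 * (p - 1) ^ 2)) /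
      (4 * (p - 1)) := by
  have h : p - 1 ≠ 0 := by linarith
  unfold Sf bp
  field_simp
  ring

lemma S_bounds {p : ℝ} (hp1 : 1 < p) (hp2 : p < 2) :
    0 < Sf p ∧ Sf p ≤ 3 * (p - 1) / 4 := by
  obtain ⟨h1, h2⟩ := sqrt_bounds hp1 hp2
  have he0 : (0:ℝ) < p - 1 := by linarith
  rw [S_eq hp1]
  constructor
  · apply div_pos (by linarith) (by linarith)
  · rw [div_le_div_iff₀ (by linarith) (by norm_num)]
    nlinarith

lemma S_lt_one {p : ℝ} (hp1 : 1 < p) (hp2 : p < 2) : Sf p < 1 := by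
  obtain ⟨_, h⟩ := S_bounds hp1 hp2
  linarith

lemma cp_eq {p : ℝ} (hp1 : 1 < p) : cp p = Xf p + Sf p := by
  have h : p - 1 ≠ 0 := by linarith
  unfold cp Xf Sf ap bp
  field_simp
  ring

lemma key_eq {p : ℝ} (hp1 : 1 < p) (hp2 : p < 2) :
    Kp p / (p - 1) = Cf p * (Gf p * Df p) := by
  have hX1 := X_gt_one hp1 hp2
  have hX0 : (0:ℝ) < Xf p := by linarith
  obtain ⟨hS0, _⟩ := S_bounds hp1 hp2
  have hΓX := Real.Gamma_pos_of_pos hX0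
  have hΓS := Real.Gamma_pos_of_pos (by linarith : (0:ℝ) < Sf p + 1 / 2)
  have ha : ap p + 3 / 2 = Xf p + 1 := by unfold Xf; ring
  have hb : bp p + 3 / 2 = Sf p + 1 / 2 := by unfold Sf; ring
  have hΓa : Real.Gamma (ap p + 3 / 2) = Xf p * Real.Gamma (Xf p) := by
    rw [ha, Real.Gamma_add_one hX0.ne']
  have he : Real.exp (Sf p * Real.log (Xf p)) ≠ 0 := (Real.exp_pos _).ne'
  have hp : p - 1 ≠ 0 := by linarith
  unfold Kp Cf Gf Df
  rw [cp_eq hp1, hΓa, hb]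
  field_simp

lemma key_ub {p : ℝ} (hp1 : 1 < p) (hp2 : p < 2) : Gf p ≤ 1 := by
  have hX1 := X_gt_one hp1 hp2
  have hX0 : (0:ℝ) < Xf p := by linarith
  obtain ⟨hS0, _⟩ := S_bounds hp1 hp2
  have hS1 := S_lt_one hp1 hp2
  have hw := wendel1 hX0 hS0.le hS1.le
  have hXS : Xf p ^ Sf p = Real.exp (Sf p * Real.log (Xf p)) := by
    rw [Real.rpow_def_of_pos hX0, mul_comm]
  rw [Gf, div_le_one (by positivity)]
  calc Real.Gamma (Xf p + Sf p) ≤ Real.Gamma (Xf p) * Xf p ^ Sf p := hw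
    _ = Real.Gamma (Xf p) * Real.exp (Sf p * Real.log (Xf p)) := by rw [hXS]

lemma key_lb {p : ℝ} (hp1 : 1 < p) (hp2 : p < 2) : lof p ≤ Gf p := by
  have hX1 := X_gt_one hp1 hp2
  have hX0 : (0:ℝ) < Xf p := by linarith
  obtain ⟨hS0, _⟩ := S_bounds hp1 hp2
  have hS1 := S_lt_one hp1 hp2
  have hXS0 : (0:ℝ) < Xf p + Sf p := by linarith
  have hw := wendel2 hX0 hS0.le hS1.le
  have hXS : Xf p ^ Sf p = Real.exp (Sf p * Real.log (Xf p)) := by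
    rw [Real.rpow_def_of_pos hX0, mul_comm]
  have hlo : lof p = (Xf p / (Xf p + Sf p)) ^ (1 - Sf p) := by
    rw [lof, Real.rpow_def_of_pos (by positivity), mul_comm]
  rw [hlo, Gf, ← hXS]
  rw [Real.div_rpow hX0.le hXS0.le]
  rw [div_le_div_iff₀ (by positivity) (by positivity)]
  have hXsplit : Xf p ^ (1 - Sf p) * Xf p ^ Sf p = Xf p := by
    rw [← Real.rpow_add hX0]
    simp
  calc Xf p ^ (1 - Sf p) * (Real.Gamma (Xf p) * Xf p ^ Sf p)
      = Real.Gamma (Xf p) * (Xf p ^ (1 - Sf p) * Xf p ^ Sf p) := by ring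
    _ = Real.Gamma (Xf p) * Xf p := by rw [hXsplit]
    _ ≤ Real.Gamma (Xf p + Sf p) * (Xf p + Sf p) ^ (1 - Sf p) := hw

/- ### The main theorem -/

/-- `K_p = (p-1)(1 + o(1))` as `p → 1⁺`. -/
theorem stmt_14 :
    Tendsto (fun p : ℝ => Kp p / (p - 1)) (nhdsWithin 1 (Set.Ioi 1)) (nhds 1) := by
  set l := nhdsWithin (1:ℝ) (Set.Ioi 1) with hl
  have hev : ∀ᶠ p in l, 1 < p ∧ p < 2 := by
    filter_upwards [Ioo_mem_nhdsGT_of_mem (Set.mem_Ico.mpr ⟨le_refl (1:ℝ), one_lt_two⟩)]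
      with p hp using ⟨hp.1, hp.2⟩
  -- ε := p - 1 tends to 0 within Ioi 0
  have ht : Tendsto (fun p : ℝ => p - 1) l (nhdsWithin 0 (Set.Ioi 0)) := by
    rw [tendsto_nhdsWithin_iff]
    constructor
    · have h : Tendsto (fun p : ℝ => p - 1) (nhds 1) (nhds (1 - 1)) :=
        tendsto_id.sub tendsto_const_nhds
      simpa using h.mono_left nhdsWithin_le_nhds
    · filter_upwards [self_mem_nhdsWithin] with p hp
      exact Set.mem_Ioi.2 (by simpa using sub_pos.2 (Set.mem_Ioi.1 hp))
  have hε0 : Tendsto (fun p : ℝ => p - 1) l (nhds 0) := ht.mono_right nhdsWithin_le_nhds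
  -- S → 0
  have TS : Tendsto Sf l (nhds 0) := by
    apply tendsto_of_tendsto_of_tendsto_of_le_of_le' (g := fun _ : ℝ => (0:ℝ))
      (h := fun p : ℝ => 3 * (p - 1) / 4) tendsto_const_nhds
    · have : Tendsto (fun p : ℝ => 3 * (p - 1) / 4) l (nhds (3 * 0 / 4)) :=
        (hε0.const_mul 3).div_const 4
      simpa using this
    · filter_upwards [hev] with p hp using (S_bounds hp.1 hp.2).1.le
    · filter_upwards [hev] with p hp using (S_bounds hp.1 hp.2).2
  -- ε * X → 1
  have TXe : Tendsto (fun p : ℝ => (p - 1) * Xf p) l (nhds 1) := by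
    apply tendsto_of_tendsto_of_tendsto_of_le_of_le' (g := fun _ : ℝ => (1:ℝ))
      (h := fun p : ℝ => 1 + (p - 1)) tendsto_const_nhds
    · have : Tendsto (fun p : ℝ => 1 + (p - 1)) l (nhds (1 + 0)) :=
        tendsto_const_nhds.add hε0
      simpa using this
    · filter_upwards [hev] with p hp using (X_bounds hp.1 hp.2).1.le
    · filter_upwards [hev] with p hp using (X_bounds hp.1 hp.2).2.le
  -- S * log X → 0
  have TSlog : Tendsto (fun p : ℝ => Sf p * Real.log (Xf p)) l (nhds 0) := by
    have h1 : Tendsto (fun p : ℝ => (p - 1) * Real.log p) l (nhds 0) := by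
      have c1 : ContinuousAt (fun p : ℝ => (p - 1) * Real.log p) 1 :=
        (continuousAt_id.sub continuousAt_const).mul (Real.continuousAt_log one_ne_zero)
      have h : Tendsto (fun p : ℝ => (p - 1) * Real.log p) l (nhds ((1 - 1) * Real.log 1)) :=
        c1.tendsto.mono_left nhdsWithin_le_nhds
      simpa using h
    have h2 : Tendsto (fun p : ℝ => (p - 1) * Real.log (p - 1)) l (nhds 0) := by
      have := (tendsto_log_mul_rpow_nhdsGT_zero one_pos).comp ht
      simp only [Real.rpow_one, Function.comp] at this
      simpa [mul_comm, Function.comp_def] using this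
    have hup : Tendsto (fun p : ℝ => (3:ℝ) / 4 * ((p - 1) * Real.log p
        - (p - 1) * Real.log (p - 1))) l (nhds 0) := by
      have := ((h1.sub h2).const_mul ((3:ℝ)/4))
      simpa using this
    apply tendsto_of_tendsto_of_tendsto_of_le_of_le' (g := fun _ : ℝ => (0:ℝ))
      tendsto_const_nhds hup
    · filter_upwards [hev] with p hp
      obtain ⟨hS0, _⟩ := S_bounds hp.1 hp.2
      have hX1 := X_gt_one hp.1 hp.2
      have hlog : 0 ≤ Real.log (Xf p) := Real.log_nonneg hX1.le
      positivity
    · filter_upwards [hev] with p hp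
      obtain ⟨hS0, hS34⟩ := S_bounds hp.1 hp.2
      have hX1 := X_gt_one hp.1 hp.2
      have he0 : (0:ℝ) < p - 1 := by linarith [hp.1]
      have hX0 : (0:ℝ) < Xf p := by linarith
      have hlogX : 0 ≤ Real.log (Xf p) := Real.log_nonneg hX1.le
      have hXle := X_le hp.1 hp.2
      have hlogle : Real.log (Xf p) ≤ Real.log p - Real.log (p - 1) := by
        have := Real.log_le_log hX0 hXle
        rwa [Real.log_div (by linarith : p ≠ 0) he0.ne'] at this
      calc Sf p * Real.log (Xf p) ≤ 3 * (p - 1) / 4 * Real.log (Xf p) :=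
            mul_le_mul_of_nonneg_right hS34 hlogX
        _ ≤ 3 * (p - 1) / 4 * (Real.log p - Real.log (p - 1)) :=
            mul_le_mul_of_nonneg_left hlogle (by linarith)
        _ = 3 / 4 * ((p - 1) * Real.log p - (p - 1) * Real.log (p - 1)) := by
            ring
  -- C → 1
  have TC : Tendsto Cf l (nhds 1) := by
    have hΓhalf : (0:ℝ) < Real.Gamma (1/2) := Real.Gamma_pos_of_pos (by norm_num)
    have hg : ContinuousAt Real.Gamma (1/2) := by
      apply (Real.differentiableAt_Gamma _).continuousAt
      intro m
      have h0 : (0:ℝ) ≤ (m:ℝ) := Nat.cast_nonneg m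
      intro hm
      linarith
    have TΓ : Tendsto (fun p : ℝ => Real.Gamma (Sf p + 1/2)) l (nhds (Real.Gamma (1/2))) := by
      have h12 : Tendsto (fun p : ℝ => Sf p + 1/2) l (nhds (1/2)) := by
        simpa using TS.add (tendsto_const_nhds (x := (1:ℝ)/2))
      exact hg.tendsto.comp h12
    have h : Tendsto (fun p : ℝ => Real.Gamma (1/2) / Real.Gamma (Sf p + 1/2)) l
        (nhds (Real.Gamma (1/2) / Real.Gamma (1/2))) :=
      Tendsto.div tendsto_const_nhds TΓ hΓhalf.ne'
    rw [div_self hΓhalf.ne'] at h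
    exact h
  -- D → 1
  have TD : Tendsto Df l (nhds 1) := by
    have Texp : Tendsto (fun p : ℝ => Real.exp (Sf p * Real.log (Xf p))) l (nhds 1) := by
      have := Real.continuous_exp.continuousAt.tendsto.comp TSlog
      simpa [Function.comp_def] using this
    have Tden : Tendsto (fun p : ℝ => Xf p * (p - 1)) l (nhds 1) := by
      simpa [mul_comm] using TXe
    have h : Tendsto (fun p : ℝ => Real.exp (Sf p * Real.log (Xf p)) / (Xf p * (p - 1))) l
        (nhds (1 / 1)) := Texp.div Tden one_ne_zero
    delta Df
    simpa using h
  -- lo → 1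
  have Tlo : Tendsto lof l (nhds 1) := by
    have TSX : Tendsto (fun p : ℝ => Sf p / Xf p) l (nhds 0) := by
      apply tendsto_of_tendsto_of_tendsto_of_le_of_le' (g := fun _ : ℝ => (0:ℝ))
        (h := fun p : ℝ => 3 * (p - 1) / 4 * (p - 1)) tendsto_const_nhds
      · have : Tendsto (fun p : ℝ => 3 * (p - 1) / 4 * (p - 1)) l (nhds (3 * 0 / 4 * 0)) :=
          ((hε0.const_mul 3).div_const 4).mul hε0
        simpa using this
      · filter_upwards [hev] with p hp
        obtain ⟨hS0, _⟩ := S_bounds hp.1 hp.2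
        have hX1 := X_gt_one hp.1 hp.2
        positivity
      · filter_upwards [hev] with p hp
        obtain ⟨hS0, hS34⟩ := S_bounds hp.1 hp.2
        have hX1 := X_gt_one hp.1 hp.2
        have he0 : (0:ℝ) < p - 1 := by linarith [hp.1]
        have hX0 : (0:ℝ) < Xf p := by linarith
        have hXinv : 1 / Xf p ≤ p - 1 := by
          rw [div_le_iff₀ hX0]
          have := (X_bounds hp.1 hp.2).1
          nlinarith
        calc Sf p / Xf p = Sf p * (1 / Xf p) := by ring
          _ ≤ (3 * (p - 1) / 4) * (p - 1) := by
              apply mul_le_mul hS34 hXinv (by positivity) (by linarith)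
    have Tfrac : Tendsto (fun p : ℝ => Xf p / (Xf p + Sf p)) l (nhds 1) := by
      have h1 : Tendsto (fun p : ℝ => (1 + Sf p / Xf p)⁻¹) l (nhds 1) := by
        have : Tendsto (fun p : ℝ => 1 + Sf p / Xf p) l (nhds (1 + 0)) :=
          tendsto_const_nhds.add TSX
        have h2 : Tendsto (fun p : ℝ => (1 + Sf p / Xf p)⁻¹) l (nhds ((1 + 0:ℝ))⁻¹) :=
          this.inv₀ (by norm_num)
        simpa using h2
      apply h1.congr'
      filter_upwards [hev] with p hp
      obtain ⟨hS0, _⟩ := S_bounds hp.1 hp.2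
      have hX1 := X_gt_one hp.1 hp.2
      have hX0 : (0:ℝ) < Xf p := by linarith
      field_simp
    have Tlog : Tendsto (fun p : ℝ => Real.log (Xf p / (Xf p + Sf p))) l (nhds 0) := by
      have := (Real.continuousAt_log one_ne_zero).tendsto.comp Tfrac
      simpa [Function.comp_def] using this
    have T1S : Tendsto (fun p : ℝ => 1 - Sf p) l (nhds 1) := by
      have : Tendsto (fun p : ℝ => (1:ℝ) - Sf p) l (nhds (1 - 0)) :=
        tendsto_const_nhds.sub TS
      simpa using this
    have := Real.continuous_exp.continuousAt.tendsto.comp (T1S.mul Tlog)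
    delta lof
    simpa [Function.comp_def] using this
  -- Assemble by squeezing
  have TU : Tendsto (fun p : ℝ => Cf p * Df p) l (nhds 1) := by
    simpa using TC.mul TD
  have TL : Tendsto (fun p : ℝ => Cf p * (lof p * Df p)) l (nhds 1) := by
    simpa using TC.mul (Tlo.mul TD)
  apply tendsto_of_tendsto_of_tendsto_of_le_of_le' TL TU
  · filter_upwards [hev] with p hp
    rw [key_eq hp.1 hp.2]
    obtain ⟨hS0, _⟩ := S_bounds hp.1 hp.2
    have hCf : 0 < Cf p := by
      unfold Cf
      exact div_pos (Real.Gamma_pos_of_pos (by norm_num))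
        (Real.Gamma_pos_of_pos (by linarith))
    have hX1 := X_gt_one hp.1 hp.2
    have hDf : 0 < Df p := by
      unfold Df
      apply div_pos (Real.exp_pos _)
      have : (0:ℝ) < p - 1 := by linarith [hp.1]
      nlinarith
    apply mul_le_mul_of_nonneg_left _ hCf.le
    exact mul_le_mul_of_nonneg_right (key_lb hp.1 hp.2) hDf.le
  · filter_upwards [hev] with p hp
    rw [key_eq hp.1 hp.2]
    obtain ⟨hS0, _⟩ := S_bounds hp.1 hp.2
    have hCf : 0 < Cf p := by
      unfold Cf
      exact div_pos (Real.Gamma_pos_of_pos (by norm_num))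
        (Real.Gamma_pos_of_pos (by linarith))
    have hX1 := X_gt_one hp.1 hp.2
    have hDf : 0 < Df p := by
      unfold Df
      apply div_pos (Real.exp_pos _)
      have : (0:ℝ) < p - 1 := by linarith [hp.1]
      nlinarith
    calc Cf p * (Gf p * Df p) ≤ Cf p * (1 * Df p) := by
          apply mul_le_mul_of_nonneg_left _ hCf.le
          exact mul_le_mul_of_nonneg_right (key_ub hp.1 hp.2) hDf.le
    _ = Cf p * Df p := by ring
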